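/- The orbit closure of the Thue–Morse sequence under the shift map is minimal: if K is a nonempty closed subset of O := closure {σ^[k] t | k : ℕ} with σ '' K ⊆ K, then K = O. -/

import Mathlib

/-- The Thue–Morse sequence: `t n = true` iff the number of 1s in the
binary expansion of `n` is odd. -/
def thueMorse (n : ℕ) : Bool := (Nat.digits 2 n).count 1 % 2 == 1

/-- The shift map on the one-sided binary full shift. -/
def shift (x : ℕ → Bool) : ℕ → Bool := fun n => x (n + 1)

lemma tm_two_mul (n : ℕ) : thueMorse (2 * n) = thueMorse n := by
  rcases Nat.eq_zero_or_pos n with h | h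
  · subst h; rfl
  · unfold thueMorse
    rw [show 2 * n = n * 2 by ring, Nat.digits_def' (by norm_num) (by omega)]
    simp

lemma tm_two_mul_add_one (n : ℕ) : thueMorse (2 * n + 1) = !thueMorse n := by
  unfold thueMorse
  rw [Nat.digits_def' (by norm_num) (by omega)]
  have h1 : (2 * n + 1) % 2 = 1 := by omega
  have h2 : (2 * n + 1) / 2 = n := by omega
  rw [h1, h2]
  rcases Nat.mod_two_eq_zero_or_one ((Nat.digits 2 n).count 1) with h | h <;>
    simp [List.count_cons, Nat.add_mod, h]

lemma tm_pow_add : ∀ a k i : ℕ, i < 2 ^ a →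
    thueMorse (2 ^ a * k + i) = xor (thueMorse k) (thueMorse i)
  | 0, k, i, h => by
    interval_cases i
    show thueMorse (1 * k + 0) = _
    rw [Nat.one_mul, Nat.add_zero]
    cases thueMorse k <;> simp [thueMorse]
  | a+1, k, i, h => by
    have hpow : 2 ^ (a+1) = 2 * 2 ^ a := by ring
    rcases Nat.even_or_odd i with ⟨j, hj⟩ | ⟨j, hj⟩
    · have hj' : j < 2 ^ a := by omega
      have e : 2 ^ (a+1) * k + i = 2 * (2 ^ a * k + j) := by
        rw [hpow, Nat.mul_assoc]; omega
      rw [e, tm_two_mul, tm_pow_add a k j hj',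
        show i = 2 * j by omega, tm_two_mul]
    · have hj' : j < 2 ^ a := by omega
      have e : 2 ^ (a+1) * k + i = 2 * (2 ^ a * k + j) + 1 := by
        rw [hpow, Nat.mul_assoc]; omega
      rw [e, tm_two_mul_add_one, tm_pow_add a k j hj',
        show i = 2 * j + 1 by omega, tm_two_mul_add_one]
      cases thueMorse k <;> cases thueMorse j <;> simp

lemma tm_false_exists (m : ℕ) : ∃ k, m ≤ k ∧ k ≤ m + 2 ∧ thueMorse k = false := by
  by_cases h0 : thueMorse m = false
  · exact ⟨m, le_refl _, by omega, h0⟩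
  by_cases h1 : thueMorse (m+1) = false
  · exact ⟨m+1, by omega, by omega, h1⟩
  refine ⟨m+2, by omega, le_refl _, ?_⟩
  rcases Nat.even_or_odd m with ⟨n, hn⟩ | ⟨n, hn⟩
  · exfalso
    rw [show m = 2 * n by omega, tm_two_mul] at h0
    rw [show m + 1 = 2 * n + 1 by omega, tm_two_mul_add_one] at h1
    cases thueMorse n <;> simp_all
  · rw [show m + 1 = 2 * (n+1) by omega, tm_two_mul] at h1
    rw [show m + 2 = 2 * (n+1) + 1 by omega, tm_two_mul_add_one]
    cases h : thueMorse (n+1) <;> simp_all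

lemma mem_closure_iff_agree (S : Set (ℕ → Bool)) (x : ℕ → Bool) :
    x ∈ closure S ↔ ∀ n, ∃ y ∈ S, ∀ i < n, y i = x i := by
  constructor
  · intro h n
    have hV : IsOpen {y : ℕ → Bool | ∀ i < n, y i = x i} := by
      have e : {y : ℕ → Bool | ∀ i < n, y i = x i}
          = ⋂ i ∈ Finset.range n, (fun y : ℕ → Bool => y i) ⁻¹' {x i} := by
        ext y; simp [Finset.mem_range]
      rw [e]
      exact isOpen_biInter_finset fun i _ =>
        (continuous_apply i).isOpen_preimage _ (isOpen_discrete _)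
    rcases mem_closure_iff.mp h _ hV (fun i _ => rfl) with ⟨y, hy1, hy2⟩
    exact ⟨y, hy2, hy1⟩
  · intro h
    choose y hyS hy using h
    have ht : Filter.Tendsto y Filter.atTop (nhds x) := by
      rw [tendsto_pi_nhds]
      intro i
      apply tendsto_const_nhds.congr'
      filter_upwards [Filter.eventually_ge_atTop (i+1)] with n hn
      exact (hy n i (by omega)).symm
    exact mem_closure_of_tendsto ht (Filter.Eventually.of_forall hyS)

lemma shift_iter : ∀ (k : ℕ) (x : ℕ → Bool) (i : ℕ), shift^[k] x i = x (k + i)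
  | 0, _, _ => by simp
  | k+1, x, i => by
    rw [Function.iterate_succ_apply, shift_iter k (shift x) i]
    show x (k + i + 1) = x (k + 1 + i)
    congr 1; omega

/-- The orbit closure of the Thue–Morse sequence under the shift map is
minimal: it has no proper nonempty closed shift-invariant subset. -/
theorem thueMorse_orbitClosure_minimal :
    ∀ K : Set (ℕ → Bool),
      K ⊆ closure {x : ℕ → Bool | ∃ k : ℕ, shift^[k] thueMorse = x} →
      K.Nonempty → IsClosed K → shift '' K ⊆ K →
      K = closure {x : ℕ → Bool | ∃ k : ℕ, shift^[k] thueMorse = x} := by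
  intro K hKO hKne hKc hKinv
  obtain ⟨x, hxK⟩ := hKne
  have horb : ∀ k, shift^[k] x ∈ K := by
    intro k
    induction k with
    | zero => exact hxK
    | succ k ih =>
      rw [Function.iterate_succ_apply']
      exact hKinv ⟨_, ih, rfl⟩
  have hxA := (mem_closure_iff_agree _ x).mp (hKO hxK)
  -- thueMorse lies in the orbit closure of x
  have htm : thueMorse ∈ closure {z : ℕ → Bool | ∃ k, shift^[k] x = z} := by
    rw [mem_closure_iff_agree]
    intro n
    set P := 2 ^ n with hP
    have hnP : n < P := Nat.lt_two_pow_self (n := n)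
    have hPpos : 0 < P := by positivity
    obtain ⟨y, ⟨m, hym⟩, hagree⟩ := hxA (3 * P + n)
    obtain ⟨k, hk1, hk2, hk0⟩ := tm_false_exists (m / P + 1)
    have hmle : m ≤ P * k ∧ P * k ≤ m + 3 * P := by
      have h3 : P * (m / P) + m % P = m := Nat.div_add_mod m P
      have h2 : m % P < P := Nat.mod_lt m hPpos
      have h4 : P * (m / P + 1) ≤ P * k := Nat.mul_le_mul_left P hk1
      have h5 : P * k ≤ P * (m / P + 3) := Nat.mul_le_mul_left P hk2
      rw [Nat.mul_add, Nat.mul_one] at h4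
      rw [Nat.mul_add] at h5
      omega
    set j := P * k - m with hj
    refine ⟨shift^[j] x, ⟨j, rfl⟩, ?_⟩
    intro i hi
    rw [shift_iter]
    have hji : j + i < 3 * P + n := by omega
    rw [← hagree (j + i) hji, ← hym, shift_iter,
      show m + (j + i) = P * k + i by omega,
      tm_pow_add n k i (by omega), hk0]
    simp
  have horbK : {z : ℕ → Bool | ∃ k, shift^[k] x = z} ⊆ K := by
    rintro _ ⟨k, rfl⟩; exact horb k
  have htK : thueMorse ∈ K := closure_minimal horbK hKc htm
  have horbt : ∀ k, shift^[k] thueMorse ∈ K := by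
    intro k
    induction k with
    | zero => exact htK
    | succ k ih =>
      rw [Function.iterate_succ_apply']
      exact hKinv ⟨_, ih, rfl⟩
  refine subset_antisymm hKO (closure_minimal ?_ hKc)
  rintro _ ⟨k, rfl⟩; exact horbt k
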